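/- Let n > 0, ε > 0, r₀ > 0, and let H : [0, T) → ℝ be C¹ and ρ : [0, T) → ℝ continuous with H' = -(ρ + H²/n), H(r) < 0 for all r ∈ [0, T), and ∫₀ʳ ρ(s) ds ≥ -ε for all r ∈ [r₀, T), with H(0) < -ε. Then, setting Q(r) = ∫₀ʳ H(s)²/n ds, we have Q(r₀) > 0 and T ≤ r₀ + n/Q(r₀). -/

import Mathlib

/-- Combined quantitative claim of Theorem 2.4: if `H' = -(ρ + H²/n)` on `[0,T)`,
`H < 0` on `[0,T)`, `H 0 < -ε`, and `∫₀ʳ ρ ≥ -ε` for `r ∈ [r₀, T)`, then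
`Q r₀ = ∫₀^{r₀} H²/n > 0` and `T ≤ r₀ + n / Q r₀`. -/
theorem stmt_14 (n ε r₀ T : ℝ) (hn : 0 < n) (hε : 0 < ε)
    (hr₀ : 0 < r₀) (hr₀T : r₀ < T)
    (H ρ : ℝ → ℝ)
    (hρ : ContinuousOn ρ (Set.Ico 0 T))
    (hH : ∀ r ∈ Set.Ico (0:ℝ) T, HasDerivAt H (-(ρ r + H r ^ 2 / n)) r)
    (hHneg : ∀ r ∈ Set.Ico (0:ℝ) T, H r < 0)
    (hH0 : H 0 < -ε)
    (hint : ∀ r ∈ Set.Ico r₀ T, -ε ≤ ∫ s in (0:ℝ)..r, ρ s) :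
    0 < (∫ s in (0:ℝ)..r₀, H s ^ 2 / n) ∧
      T ≤ r₀ + n / ∫ s in (0:ℝ)..r₀, H s ^ 2 / n := by
  set f : ℝ → ℝ := fun s => H s ^ 2 / n with hf
  set Q : ℝ → ℝ := fun r => ∫ s in (0:ℝ)..r, f s with hQ
  -- continuity of H on Ico 0 T
  have hHcont : ContinuousOn H (Set.Ico 0 T) := fun r hr =>
    ((hH r hr).continuousAt).continuousWithinAt
  have hfcont : ContinuousOn f (Set.Ico 0 T) := by
    exact ((hHcont.pow 2).div_const n)
  -- integrability on subintervals
  have hsub : ∀ {a b : ℝ}, 0 ≤ a → b < T → a ≤ b → Set.uIcc a b ⊆ Set.Ico 0 T := by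
    intro a b ha hb hab
    rw [Set.uIcc_of_le hab]
    exact fun x hx => ⟨le_trans ha hx.1, lt_of_le_of_lt hx.2 hb⟩
  have hfint : ∀ {a b : ℝ}, 0 ≤ a → b < T → a ≤ b → IntervalIntegrable f MeasureTheory.volume a b := by
    intro a b ha hb hab
    exact (hfcont.mono (hsub ha hb hab)).intervalIntegrable
  have hρint : ∀ {b : ℝ}, 0 ≤ b → b < T → IntervalIntegrable ρ MeasureTheory.volume 0 b := by
    intro b hb0 hbT
    exact (hρ.mono (hsub le_rfl hbT hb0)).intervalIntegrable
  have hfnonneg : ∀ r ∈ Set.Ico (0:ℝ) T, 0 ≤ f r := by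
    intro r hr
    exact div_nonneg (sq_nonneg _) hn.le
  -- Q r₀ > 0
  have hQr₀ : 0 < Q r₀ := by
    apply intervalIntegral.intervalIntegral_pos_of_pos_on (hfint le_rfl hr₀T hr₀.le)
    · intro x hx
      have hne : H x ≠ 0 := (hHneg x ⟨hx.1.le, lt_trans hx.2 hr₀T⟩).ne
      exact div_pos (by positivity) hn
    · exact hr₀
  refine ⟨hQr₀, ?_⟩
  -- monotonicity of Q
  have hQmono : ∀ r ∈ Set.Ico r₀ T, Q r₀ ≤ Q r := by
    intro r hr
    have hsplit := intervalIntegral.integral_add_adjacent_intervals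
      (hfint le_rfl hr₀T hr₀.le) (hfint hr₀.le hr.2 hr.1)
    have h2 : 0 ≤ ∫ s in r₀..r, f s := by
      apply intervalIntegral.integral_nonneg hr.1
      intro u hu
      exact hfnonneg u ⟨le_trans hr₀.le hu.1, lt_of_le_of_lt hu.2 hr.2⟩
    have : Q r = Q r₀ + ∫ s in r₀..r, f s := by rw [hsplit]
    linarith
  have hQpos : ∀ r ∈ Set.Ico r₀ T, 0 < Q r := fun r hr => lt_of_lt_of_le hQr₀ (hQmono r hr)
  -- key inequality Q r < -H r on [r₀, T)
  have hkey : ∀ r ∈ Set.Ico r₀ T, Q r < -H r := by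
    intro r hr
    have hr0 : (0:ℝ) ≤ r := le_trans hr₀.le hr.1
    have hderint : IntervalIntegrable (fun s => -(ρ s + f s)) MeasureTheory.volume 0 r :=
      ((hρint hr0 hr.2).add (hfint le_rfl hr.2 hr0)).neg
    have hftc := intervalIntegral.integral_eq_sub_of_hasDerivAt
      (f := H) (f' := fun s => -(ρ s + f s))
      (fun x hx => hH x (hsub le_rfl hr.2 hr0 hx)) hderint
    have hsplit : (∫ s in (0:ℝ)..r, -(ρ s + f s))
        = -((∫ s in (0:ℝ)..r, ρ s) + Q r) := by
      rw [intervalIntegral.integral_neg,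
        intervalIntegral.integral_add (hρint hr0 hr.2) (hfint le_rfl hr.2 hr0)]
    have hρbound := hint r hr
    rw [hsplit] at hftc
    -- H r - H 0 = -(∫ρ + Q r)
    have : Q r = H 0 - H r - ∫ s in (0:ℝ)..r, ρ s := by linarith
    linarith
  -- derivative of Q
  have hQ' : ∀ r ∈ Set.Ioo (0:ℝ) T, HasDerivAt Q (f r) r := by
    intro r hr
    have hfc : ContinuousOn f (Set.Ioo 0 T) := hfcont.mono Set.Ioo_subset_Ico_self
    exact intervalIntegral.integral_hasDerivAt_right (hfint le_rfl hr.2 hr.1.le)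
      (hfc.stronglyMeasurableAtFilter isOpen_Ioo r hr)
      (hfc.continuousAt (isOpen_Ioo.mem_nhds hr))
  -- φ := r + n / Q r has derivative < 0 on Ico r₀ T
  set φ : ℝ → ℝ := fun r => r + n / Q r with hφ
  have hmemIoo : ∀ r ∈ Set.Ico r₀ T, r ∈ Set.Ioo (0:ℝ) T :=
    fun r hr => ⟨lt_of_lt_of_le hr₀ hr.1, hr.2⟩
  have hφderiv : ∀ r ∈ Set.Ico r₀ T,
      HasDerivAt φ (1 + (0 * Q r - n * f r) / Q r ^ 2) r := by
    intro r hr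
    exact (hasDerivAt_id r).add
      ((hasDerivAt_const r n).div (hQ' r (hmemIoo r hr)) (hQpos r hr).ne')
  have hφneg : ∀ r ∈ Set.Ico r₀ T, 1 + (0 * Q r - n * f r) / Q r ^ 2 < 0 := by
    intro r hr
    have hQp := hQpos r hr
    have hk := hkey r hr
    have hq2 : Q r ^ 2 < H r ^ 2 := by nlinarith
    have hnf : n * f r = H r ^ 2 := by
      show n * (H r ^ 2 / n) = H r ^ 2
      field_simp [hf]
    rw [add_comm, ← lt_neg_iff_add_neg, div_lt_iff₀ (by positivity)]
    nlinarith
  have hφcont : ContinuousOn φ (Set.Ico r₀ T) :=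
    fun r hr => ((hφderiv r hr).continuousAt).continuousWithinAt
  have hanti : StrictAntiOn φ (Set.Ico r₀ T) := by
    apply strictAntiOn_of_deriv_neg (convex_Ico r₀ T) hφcont
    intro x hx
    rw [interior_Ico] at hx
    have hx' : x ∈ Set.Ico r₀ T := ⟨hx.1.le, hx.2⟩
    rw [(hφderiv x hx').deriv]
    exact hφneg x hx'
  -- conclude
  by_contra hcon
  push_neg at hcon
  set c := r₀ + n / Q r₀ with hc
  have hpos : 0 < n / Q r₀ := div_pos hn hQr₀
  have hr₀c : r₀ < c := by simp [hc]; linarith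
  have hcmem : c ∈ Set.Ico r₀ T := ⟨hr₀c.le, hcon⟩
  have h1 : φ c < φ r₀ := hanti ⟨le_rfl, hr₀T⟩ hcmem hr₀c
  have h2 : 0 < n / Q c := div_pos hn (hQpos c hcmem)
  have e1 : φ r₀ = c := rfl
  have e2 : φ c = c + n / Q c := rfl
  linarith [e1 ▸ e2 ▸ h1]
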